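/- Let A, B ∈ ℂ^{n×n} admit a Weierstrass decomposition T·A·S = diag(J, I_{n−d}), T·B·S = diag(I_d, N) with N nilpotent, and suppose J is block diagonal, J = diag(J₁, J₂), with J₁ ∈ ℂ^{s×s} and J₂ ∈ ℂ^{(d−s)×(d−s)}. Let γ ∈ ℂ and ρ > 0 be such that every eigenvalue of J₁ lies strictly inside the circle |z − γ| = ρ and every eigenvalue of J₂ lies strictly outside it. Then zB − A is invertible for every z on the circle and (1/(2π√−1)) ∮_{|z−γ|=ρ} (zB − A)^{-1} B dz = S · diag(I_s, 0_{(n−s)×(n−s)}) · S^{-1} = S_{(:,1:s)} (S^{-1})_{(1:s,:)}, where S_{(:,1:s)} denotes the first s columns of S and (S^{-1})_{(1:s,:)} the first s rows of S^{-1}. -/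

import Mathlib

open Matrix

open Matrix Metric Set Complex

lemma diff_det {m : ℕ} {G : ℂ → Matrix (Fin m) (Fin m) ℂ}
    (hG : ∀ a b, Differentiable ℂ fun z => G z a b) :
    Differentiable ℂ fun z => (G z).det := by
  simp only [Matrix.det_apply']
  exact Differentiable.fun_sum fun σ _ =>
    (Differentiable.fun_finset_prod fun i _ => hG _ _).const_mul _

lemma diffAt_inv_entry {m : ℕ} {G : ℂ → Matrix (Fin m) (Fin m) ℂ}
    (hG : ∀ a b, Differentiable ℂ fun z => G z a b) {z₀ : ℂ}
    (hz : (G z₀).det ≠ 0) (a b : Fin m) :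
    DifferentiableAt ℂ (fun z => (G z)⁻¹ a b) z₀ := by
  have hadj : ∀ a b : Fin m, Differentiable ℂ fun z => (G z).adjugate a b := by
    intro a b
    simp only [Matrix.adjugate_apply]
    refine diff_det fun i j => ?_
    simp only [Matrix.updateRow_apply]
    by_cases h : i = b <;> simp only [h, if_true, if_false, if_neg]
    · exact differentiable_const _
    · exact hG _ _
  have he : (fun z => (G z)⁻¹ a b) = fun z => ((G z).det)⁻¹ * (G z).adjugate a b := by
    funext z
    rw [Matrix.inv_def, Matrix.smul_apply, Ring.inverse_eq_inv', smul_eq_mul]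
  rw [he]
  exact (((diff_det hG) z₀).inv hz).mul ((hadj a b) z₀)

lemma inside_unit {m : ℕ} (M : Matrix (Fin m) (Fin m) ℂ) {γ : ℂ} {ρ : ℝ}
    (hρ : 0 < ρ)
    (hin : ∀ μ : ℂ, (μ • (1 : Matrix (Fin m) (Fin m) ℂ) - M).det = 0 →
      ‖μ - γ‖ < ρ)
    {w : ℂ} (hw : ‖w‖ ≤ ρ⁻¹) :
    ((1 : Matrix (Fin m) (Fin m) ℂ) - w • (M - γ • 1)).det ≠ 0 := by
  rcases eq_or_ne w 0 with rfl | hw0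
  · simp
  intro h
  have key : ((γ + w⁻¹) • (1 : Matrix (Fin m) (Fin m) ℂ) - M)
      = w⁻¹ • ((1 : Matrix (Fin m) (Fin m) ℂ) - w • (M - γ • 1)) := by
    rw [smul_sub, smul_smul, inv_mul_cancel₀ hw0, one_smul, add_smul]
    abel
  have hdet0 : ((γ + w⁻¹) • (1 : Matrix (Fin m) (Fin m) ℂ) - M).det = 0 := by
    rw [key, Matrix.det_smul, h, mul_zero]
  have := hin _ hdet0
  rw [add_sub_cancel_left] at this
  rw [norm_inv] at this
  have h1 : ρ⁻¹ < ‖w‖ := by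
    have hw0' : 0 < ‖w‖ := by
      exact norm_pos_iff.mpr hw0
    exact (inv_lt_comm₀ hρ hw0').mpr this
  exact absurd hw (not_le.mpr h1)

lemma integral_inside {m : ℕ} (M : Matrix (Fin m) (Fin m) ℂ) {γ : ℂ} {ρ : ℝ} (hρ : 0 < ρ)
    (hin : ∀ μ : ℂ, (μ • (1 : Matrix (Fin m) (Fin m) ℂ) - M).det = 0 →
      ‖μ - γ‖ < ρ) (a b : Fin m) :
    (∮ z in C(γ, ρ), ((z • (1 : Matrix (Fin m) (Fin m) ℂ) - M)⁻¹ a b))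
      = (2 * Real.pi * Complex.I) * (if a = b then 1 else 0) := by
  set E := M - γ • (1 : Matrix (Fin m) (Fin m) ℂ) with hE
  set g : ℂ → ℂ := fun w => ((1 : Matrix (Fin m) (Fin m) ℂ) - w • E)⁻¹ a b with hg
  have hρ' : (0:ℝ) < ρ⁻¹ := inv_pos.mpr hρ
  have hdiffG : ∀ a b : Fin m,
      Differentiable ℂ fun w : ℂ => ((1 : Matrix (Fin m) (Fin m) ℂ) - w • E) a b := by
    intro a b
    simp only [Matrix.sub_apply, Matrix.smul_apply, smul_eq_mul]
    exact (differentiable_const _).sub (differentiable_id.mul (differentiable_const _))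
  have hgdiff : ∀ w : ℂ, ‖w‖ ≤ ρ⁻¹ → DifferentiableAt ℂ g w := by
    intro w hw
    exact diffAt_inv_entry hdiffG (inside_unit M hρ hin hw) a b
  have hC : (∮ w in C((0:ℂ), ρ⁻¹), (w - 0)⁻¹ • g w) = (2 * Real.pi * Complex.I : ℂ) • g 0 := by
    apply DiffContOnCl.circleIntegral_sub_inv_smul
    · apply DifferentiableOn.diffContOnCl
      rw [closure_ball (0:ℂ) (ne_of_gt hρ')]
      intro w hw
      refine (hgdiff w ?_).differentiableWithinAt
      simpa [Complex.dist_eq] using mem_closedBall.mp hw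
    · exact mem_ball_self hρ'
  have hg0 : g 0 = if a = b then 1 else 0 := by
    simp [hg, Matrix.one_apply]
  have hres : ∀ θ : ℝ, deriv (circleMap γ ρ) θ •
      ((circleMap γ ρ θ • (1 : Matrix (Fin m) (Fin m) ℂ) - M)⁻¹ a b)
      = Complex.I * g (circleMap 0 ρ⁻¹ (-θ)) := by
    intro θ
    set z := circleMap γ ρ θ with hz
    set w : ℂ := circleMap 0 ρ⁻¹ (-θ) with hw
    have hzne : circleMap 0 ρ θ ≠ 0 := circleMap_ne_center (ne_of_gt hρ)
    have hwne : w ≠ 0 := circleMap_ne_center (ne_of_gt hρ')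
    have hw_eq : w = (circleMap 0 ρ θ)⁻¹ := by
      simp only [hw, circleMap, zero_add, mul_inv, ← Complex.exp_neg]
      push_cast
      ring_nf
    have hwinv : w⁻¹ = z - γ := by
      rw [hw_eq, inv_inv, circleMap_sub_center]
    have habs : ‖w‖ = ρ⁻¹ := by
      rw [hw]
      simp [abs_of_pos hρ']
    have hKdet : ((1 : Matrix (Fin m) (Fin m) ℂ) - w • E).det ≠ 0 :=
      inside_unit M hρ hin (le_of_eq habs)
    have hzM : z • (1 : Matrix (Fin m) (Fin m) ℂ) - M = w⁻¹ • (1 - w • E) := by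
      rw [smul_sub, smul_smul, inv_mul_cancel₀ hwne, one_smul, hwinv, hE, sub_smul]
      abel
    have hrinv : (z • (1 : Matrix (Fin m) (Fin m) ℂ) - M)⁻¹
        = w • ((1 : Matrix (Fin m) (Fin m) ℂ) - w • E)⁻¹ := by
      apply Matrix.inv_eq_right_inv
      rw [hzM, Matrix.smul_mul, Matrix.mul_smul, smul_smul, inv_mul_cancel₀ hwne, one_smul,
        Matrix.mul_nonsing_inv _ (isUnit_iff_ne_zero.mpr hKdet)]
    rw [hrinv, deriv_circleMap, Matrix.smul_apply, smul_eq_mul, smul_eq_mul]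
    simp only [hg]
    rw [hw_eq]
    field_simp
  calc (∮ z in C(γ, ρ), ((z • (1 : Matrix (Fin m) (Fin m) ℂ) - M)⁻¹ a b))
      = ∫ θ in (0:ℝ)..2 * Real.pi, Complex.I * g (circleMap 0 ρ⁻¹ (-θ)) := by
        refine intervalIntegral.integral_congr fun θ _ => ?_
        exact hres θ
    _ = ∫ θ in (-(2 * Real.pi):ℝ)..(-0:ℝ), Complex.I * g (circleMap 0 ρ⁻¹ θ) := by
        exact intervalIntegral.integral_comp_neg fun θ => Complex.I * g (circleMap 0 ρ⁻¹ θ)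
    _ = ∫ θ in (0:ℝ)..2 * Real.pi, Complex.I * g (circleMap 0 ρ⁻¹ θ) := by
        have hu : Function.Periodic (fun θ => Complex.I * g (circleMap 0 ρ⁻¹ θ)) (2 * Real.pi) :=
          fun θ => by simp [periodic_circleMap 0 ρ⁻¹ θ]
        have := hu.intervalIntegral_add_eq (-(2 * Real.pi)) 0
        simpa using this
    _ = ∮ w in C((0:ℂ), ρ⁻¹), (w - 0)⁻¹ • g w := by
        refine intervalIntegral.integral_congr fun θ _ => ?_
        have hwne : circleMap 0 ρ⁻¹ θ ≠ 0 := circleMap_ne_center (ne_of_gt hρ')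
        rw [deriv_circleMap]
        simp only [zero_add, sub_zero, smul_eq_mul]
        field_simp
        exact (mul_div_cancel_right₀ _ (by simpa [one_div] using hwne)).symm
    _ = (2 * Real.pi * Complex.I) * (if a = b then 1 else 0) := by
        rw [hC, hg0, smul_eq_mul]

lemma smul_one_sub_entry_diff {m : ℕ} (M : Matrix (Fin m) (Fin m) ℂ) (a b : Fin m) :
    Differentiable ℂ fun z : ℂ => (z • (1 : Matrix (Fin m) (Fin m) ℂ) - M) a b := by
  simp only [Matrix.sub_apply, Matrix.smul_apply, smul_eq_mul]
  exact (differentiable_id.mul (differentiable_const _)).sub (differentiable_const _)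

lemma integral_outside {m : ℕ} (M : Matrix (Fin m) (Fin m) ℂ) {γ : ℂ} {ρ : ℝ} (hρ : 0 < ρ)
    (hout : ∀ μ : ℂ, (μ • (1 : Matrix (Fin m) (Fin m) ℂ) - M).det = 0 →
      ρ < ‖μ - γ‖) (a b : Fin m) :
    (∮ z in C(γ, ρ), ((z • (1 : Matrix (Fin m) (Fin m) ℂ) - M)⁻¹ a b)) = 0 := by
  have hdet : ∀ z ∈ closedBall γ ρ, (z • (1 : Matrix (Fin m) (Fin m) ℂ) - M).det ≠ 0 := by
    intro z hz h
    have := hout z h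
    rw [mem_closedBall, Complex.dist_eq] at hz
    exact absurd hz (not_le.mpr this)
  have hdiff : ∀ z ∈ closedBall γ ρ,
      DifferentiableAt ℂ (fun z : ℂ => (z • (1 : Matrix (Fin m) (Fin m) ℂ) - M)⁻¹ a b) z :=
    fun z hz => diffAt_inv_entry (fun a b => smul_one_sub_entry_diff M a b) (hdet z hz) a b
  refine Complex.circleIntegral_eq_zero_of_differentiable_on_off_countable hρ.le
    Set.countable_empty (fun z hz => (hdiff z hz).continuousAt.continuousWithinAt) ?_
  exact fun z hz => hdiff z (ball_subset_closedBall hz.1)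

lemma nilpotent_det_ne {m : ℕ} (N : Matrix (Fin m) (Fin m) ℂ) (hN : IsNilpotent N) (z : ℂ) :
    (z • N - 1).det ≠ 0 := by
  have h1 : IsNilpotent (z • N) := by
    obtain ⟨k, hk⟩ := hN
    exact ⟨k, by rw [smul_pow, hk, smul_zero]⟩
  have h2 : IsUnit (z • N - 1) := h1.isUnit_sub_one
  exact ((Matrix.isUnit_iff_isUnit_det _).mp h2).ne_zero

lemma integral_nilpotent {m : ℕ} (N : Matrix (Fin m) (Fin m) ℂ) (hN : IsNilpotent N)
    {γ : ℂ} {ρ : ℝ} (hρ : 0 < ρ) (a b : Fin m) :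
    (∮ z in C(γ, ρ), (((z • N - 1)⁻¹ * N) a b)) = 0 := by
  have hdiff : ∀ z : ℂ, DifferentiableAt ℂ (fun z : ℂ => ((z • N - 1)⁻¹ * N) a b) z := by
    intro z
    have hentry : ∀ a b : Fin m, Differentiable ℂ fun z : ℂ => (z • N - 1) a b := by
      intro a b
      simp only [Matrix.sub_apply, Matrix.smul_apply, smul_eq_mul]
      exact (differentiable_id.mul (differentiable_const _)).sub (differentiable_const _)
    have : (fun z : ℂ => ((z • N - 1)⁻¹ * N) a b)
        = fun z : ℂ => ∑ c : Fin m, (z • N - 1)⁻¹ a c * N c b := by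
      funext z; rw [Matrix.mul_apply]
    rw [this]
    exact DifferentiableAt.fun_sum fun c _ =>
      (diffAt_inv_entry hentry (nilpotent_det_ne N hN z) a c).mul (differentiableAt_const _)
  refine Complex.circleIntegral_eq_zero_of_differentiable_on_off_countable hρ.le
    Set.countable_empty (fun z _ => (hdiff z).continuousAt.continuousWithinAt) ?_
  exact fun z _ => hdiff z

lemma fromBlocksSub {l m : ℕ} (A A' : Matrix (Fin l) (Fin l) ℂ) (B B' : Matrix (Fin l) (Fin m) ℂ)
    (C C' : Matrix (Fin m) (Fin l) ℂ) (D D' : Matrix (Fin m) (Fin m) ℂ) :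
    fromBlocks A B C D - fromBlocks A' B' C' D'
      = fromBlocks (A - A') (B - B') (C - C') (D - D') := by
  ext i j
  rcases i with i | i <;> rcases j with j | j <;> simp [Matrix.fromBlocks, Matrix.sub_apply]

lemma blockdiag_inv {l m : ℕ} (X : Matrix (Fin l) (Fin l) ℂ) (Y : Matrix (Fin m) (Fin m) ℂ)
    (hX : X.det ≠ 0) (hY : Y.det ≠ 0) :
    (fromBlocks X 0 0 Y)⁻¹ = fromBlocks X⁻¹ 0 0 Y⁻¹ := by
  apply Matrix.inv_eq_right_inv
  rw [fromBlocks_multiply, Matrix.mul_nonsing_inv _ (isUnit_iff_ne_zero.mpr hX),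
    Matrix.mul_nonsing_inv _ (isUnit_iff_ne_zero.mpr hY)]
  simp [Matrix.fromBlocks_one]

lemma reindex_mul {p q : Type*} [Fintype p] [Fintype q] [DecidableEq p] [DecidableEq q]
    (e : p ≃ q) (X Y : Matrix p p ℂ) :
    reindex e e X * reindex e e Y = reindex e e (X * Y) := by
  simp only [Matrix.reindex_apply]
  exact Matrix.submatrix_mul_equiv X Y _ _ _

lemma circleIntegral_finset_sum {ι : Type*} (t : Finset ι) (f : ι → ℂ → ℂ) {c : ℂ} {R : ℝ}
    (h : ∀ i ∈ t, CircleIntegrable (f i) c R) :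
    (∮ z in C(c, R), ∑ i ∈ t, f i z) = ∑ i ∈ t, ∮ z in C(c, R), f i z := by
  simp only [circleIntegral, smul_eq_mul, Finset.mul_sum]
  rw [intervalIntegral.integral_finset_sum]
  intro i hi
  simpa [smul_eq_mul] using (circleIntegrable_iff R).mp (h i hi)

lemma eqv_inl {k n : ℕ} (h : k ≤ n) (a : Fin k) :
    (finSumFinEquiv.trans (finCongr (Nat.add_sub_cancel' h))) (Sum.inl a)
      = Fin.castLE h a := by
  simp [Fin.ext_iff]

lemma eqv_inr_val {k n : ℕ} (h : k ≤ n) (b : Fin (n - k)) :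
    (((finSumFinEquiv.trans (finCongr (Nat.add_sub_cancel' h))) (Sum.inr b) : Fin n) : ℕ)
      = k + b := by
  simp

lemma eqv_symm_lt {k n : ℕ} (h : k ≤ n) (i : Fin n) (hi : (i : ℕ) < k) :
    (finSumFinEquiv.trans (finCongr (Nat.add_sub_cancel' h))).symm i = Sum.inl ⟨i, hi⟩ := by
  rw [Equiv.symm_apply_eq, eqv_inl h]
  simp [Fin.ext_iff]

lemma eqv_symm_ge {k n : ℕ} (h : k ≤ n) (i : Fin n) (hi : ¬ (i : ℕ) < k) :
    (finSumFinEquiv.trans (finCongr (Nat.add_sub_cancel' h))).symm i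
      = Sum.inr ⟨(i : ℕ) - k, by omega⟩ := by
  rw [Equiv.symm_apply_eq]
  apply Fin.ext
  rw [eqv_inr_val h]
  simp only [Fin.val_mk]
  omega

lemma proj_apply {k n : ℕ} (h : k ≤ n) (i j : Fin n) :
    (Matrix.reindex (finSumFinEquiv.trans (finCongr (Nat.add_sub_cancel' h)))
      (finSumFinEquiv.trans (finCongr (Nat.add_sub_cancel' h)))
      (fromBlocks (1 : Matrix (Fin k) (Fin k) ℂ) 0 0
        (0 : Matrix (Fin (n - k)) (Fin (n - k)) ℂ))) i j
      = if i = j ∧ (i : ℕ) < k then 1 else 0 := by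
  rw [Matrix.reindex_apply, Matrix.submatrix_apply]
  rcases lt_or_ge (i : ℕ) k with hi | hi
  · rw [eqv_symm_lt h i hi]
    rcases lt_or_ge (j : ℕ) k with hj | hj
    · rw [eqv_symm_lt h j hj]
      simp [Matrix.one_apply, Fin.ext_iff, hi]
    · rw [eqv_symm_ge h j (by omega)]
      have hne : ¬(i = j ∧ (i : ℕ) < k) := by
        rintro ⟨rfl, _⟩; omega
      simp [hne]
  · rw [eqv_symm_ge h i (by omega)]
    have hne : ¬(i = j ∧ (i : ℕ) < k) := by rintro ⟨_, h2⟩; omega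
    rcases lt_or_ge (j : ℕ) k with hj | hj
    · rw [eqv_symm_lt h j hj]; simp [hne]
    · rw [eqv_symm_ge h j (by omega)]; simp [hne]

lemma circleIntegrable_inv_entry {m : ℕ} (M : Matrix (Fin m) (Fin m) ℂ) {γ : ℂ} {ρ : ℝ}
    (hρ : 0 < ρ)
    (hdet : ∀ z : ℂ, ‖z - γ‖ = ρ →
      (z • (1 : Matrix (Fin m) (Fin m) ℂ) - M).det ≠ 0) (a b : Fin m) :
    CircleIntegrable (fun z => (z • (1 : Matrix (Fin m) (Fin m) ℂ) - M)⁻¹ a b) γ ρ := by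
  refine ContinuousOn.circleIntegrable hρ.le fun z hz => ?_
  have hz' : ‖z - γ‖ = ρ := by rwa [mem_sphere, Complex.dist_eq] at hz
  exact (diffAt_inv_entry (fun a b => smul_one_sub_entry_diff M a b)
    (hdet z hz') a b).continuousAt.continuousWithinAt

lemma circleIntegrable_nilpotent_entry {m : ℕ} (N : Matrix (Fin m) (Fin m) ℂ)
    (hN : IsNilpotent N) {γ : ℂ} {ρ : ℝ} (hρ : 0 < ρ) (a b : Fin m) :
    CircleIntegrable (fun z => ((z • N - 1)⁻¹ * N) a b) γ ρ := by
  refine ContinuousOn.circleIntegrable hρ.le fun z _ => ?_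
  have hentry : ∀ a b : Fin m, Differentiable ℂ fun z : ℂ => (z • N - 1) a b := by
    intro a b
    simp only [Matrix.sub_apply, Matrix.smul_apply, smul_eq_mul]
    exact (differentiable_id.mul (differentiable_const _)).sub (differentiable_const _)
  have : DifferentiableAt ℂ (fun z : ℂ => ((z • N - 1)⁻¹ * N) a b) z := by
    have heq : (fun z : ℂ => ((z • N - 1)⁻¹ * N) a b)
        = fun z : ℂ => ∑ c : Fin m, (z • N - 1)⁻¹ a c * N c b := by
      funext z; rw [Matrix.mul_apply]
    rw [heq]
    exact DifferentiableAt.fun_sum fun c _ =>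
      (diffAt_inv_entry hentry (nilpotent_det_ne N hN z) a c).mul (differentiableAt_const _)
  exact this.continuousAt.continuousWithinAt


/-- Under a Weierstrass decomposition with `J = diag(J₁, J₂)`,
`J₁ ∈ ℂ^{s×s}` having all eigenvalues strictly inside the circle `|z−γ| = ρ` and `J₂`
having all eigenvalues strictly outside, `zB − A` is invertible on the circle and
`(1/(2π√−1)) ∮ (zB − A)⁻¹ B dz = S · diag(I_s, 0) · S⁻¹ = S_{(:,1:s)} (S⁻¹)_{(1:s,:)}`. -/
theorem stmt_7 (n d s : ℕ) (hs : s ≤ d) (hd : d ≤ n)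
    (A B S T : Matrix (Fin n) (Fin n) ℂ)
    (J : Matrix (Fin d) (Fin d) ℂ) (N : Matrix (Fin (n - d)) (Fin (n - d)) ℂ)
    (J₁ : Matrix (Fin s) (Fin s) ℂ) (J₂ : Matrix (Fin (d - s)) (Fin (d - s)) ℂ)
    (hS : IsUnit S) (hT : IsUnit T) (hN : IsNilpotent N)
    (hA : T * A * S =
      (Matrix.reindex (finSumFinEquiv.trans (finCongr (Nat.add_sub_cancel' hd)))
        (finSumFinEquiv.trans (finCongr (Nat.add_sub_cancel' hd))))
        (Matrix.fromBlocks J 0 0 1))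
    (hB : T * B * S =
      (Matrix.reindex (finSumFinEquiv.trans (finCongr (Nat.add_sub_cancel' hd)))
        (finSumFinEquiv.trans (finCongr (Nat.add_sub_cancel' hd))))
        (Matrix.fromBlocks 1 0 0 N))
    (hJ : J =
      (Matrix.reindex (finSumFinEquiv.trans (finCongr (Nat.add_sub_cancel' hs)))
        (finSumFinEquiv.trans (finCongr (Nat.add_sub_cancel' hs))))
        (Matrix.fromBlocks J₁ 0 0 J₂))
    (γ : ℂ) (ρ : ℝ) (hρ : 0 < ρ)
    (hin : ∀ μ : ℂ, (μ • (1 : Matrix (Fin s) (Fin s) ℂ) - J₁).det = 0 →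
      ‖μ - γ‖ < ρ)
    (hout : ∀ μ : ℂ, (μ • (1 : Matrix (Fin (d - s)) (Fin (d - s)) ℂ) - J₂).det = 0 →
      ρ < ‖μ - γ‖) :
    (∀ z : ℂ, ‖z - γ‖ = ρ → IsUnit (z • B - A)) ∧
    (∀ i j : Fin n,
      (1 / (2 * (Real.pi : ℂ) * Complex.I)) *
          (∮ z in C(γ, ρ), (((z • B - A)⁻¹ * B) i j)) =
        (S * (Matrix.reindex
              (finSumFinEquiv.trans (finCongr (Nat.add_sub_cancel' (hs.trans hd))))
              (finSumFinEquiv.trans (finCongr (Nat.add_sub_cancel' (hs.trans hd)))))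
              (Matrix.fromBlocks (1 : Matrix (Fin s) (Fin s) ℂ) 0 0
                (0 : Matrix (Fin (n - s)) (Fin (n - s)) ℂ)) * S⁻¹) i j) ∧
    (∀ i j : Fin n,
      (1 / (2 * (Real.pi : ℂ) * Complex.I)) *
          (∮ z in C(γ, ρ), (((z • B - A)⁻¹ * B) i j)) =
        (S.submatrix id (Fin.castLE (hs.trans hd)) *
          S⁻¹.submatrix (Fin.castLE (hs.trans hd)) id) i j) := by
  have hSdet : IsUnit S.det := (Matrix.isUnit_iff_isUnit_det S).mp hS
  have hTdet : IsUnit T.det := (Matrix.isUnit_iff_isUnit_det T).mp hT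
  set e1 : Fin d ⊕ Fin (n - d) ≃ Fin n :=
    finSumFinEquiv.trans (finCongr (Nat.add_sub_cancel' hd)) with he1
  set e2 : Fin s ⊕ Fin (d - s) ≃ Fin d :=
    finSumFinEquiv.trans (finCongr (Nat.add_sub_cancel' hs)) with he2
  set e3 : Fin s ⊕ Fin (n - s) ≃ Fin n :=
    finSumFinEquiv.trans (finCongr (Nat.add_sub_cancel' (hs.trans hd))) with he3
  set Pbig : Matrix (Fin n) (Fin n) ℂ :=
    Matrix.reindex e3 e3 (Matrix.fromBlocks (1 : Matrix (Fin s) (Fin s) ℂ) 0 0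
      (0 : Matrix (Fin (n - s)) (Fin (n - s)) ℂ)) with hPbigdef
  set Mid : ℂ → Matrix (Fin n) (Fin n) ℂ := fun z =>
    Matrix.reindex e1 e1 (Matrix.fromBlocks
      (Matrix.reindex e2 e2 (Matrix.fromBlocks
        ((z • (1 : Matrix (Fin s) (Fin s) ℂ) - J₁)⁻¹) 0 0
        ((z • (1 : Matrix (Fin (d - s)) (Fin (d - s)) ℂ) - J₂)⁻¹))) 0 0
      ((z • N - 1)⁻¹ * N)) with hMiddef
  -- determinant facts
  have hdJ1 : ∀ z : ℂ, ‖z - γ‖ = ρ →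
      (z • (1 : Matrix (Fin s) (Fin s) ℂ) - J₁).det ≠ 0 := by
    intro z hz h
    have := hin z h
    rw [hz] at this
    exact lt_irrefl ρ this
  have hdJ2 : ∀ z : ℂ, ‖z - γ‖ = ρ →
      (z • (1 : Matrix (Fin (d - s)) (Fin (d - s)) ℂ) - J₂).det ≠ 0 := by
    intro z hz h
    have := hout z h
    rw [hz] at this
    exact lt_irrefl ρ this
  have hdN : ∀ z : ℂ, (z • N - 1).det ≠ 0 := nilpotent_det_ne N hN
  -- block structure of z • 1 - J
  have hJb : ∀ z : ℂ, z • (1 : Matrix (Fin d) (Fin d) ℂ) - J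
      = Matrix.reindex e2 e2 (Matrix.fromBlocks
          (z • (1 : Matrix (Fin s) (Fin s) ℂ) - J₁) 0 0
          (z • (1 : Matrix (Fin (d - s)) (Fin (d - s)) ℂ) - J₂)) := by
    intro z
    rw [hJ]
    have hblocks : Matrix.fromBlocks
        (z • (1 : Matrix (Fin s) (Fin s) ℂ) - J₁) 0 0
        (z • (1 : Matrix (Fin (d - s)) (Fin (d - s)) ℂ) - J₂)
        = z • (1 : Matrix (Fin s ⊕ Fin (d - s)) (Fin s ⊕ Fin (d - s)) ℂ)
          - Matrix.fromBlocks J₁ 0 0 J₂ := by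
      rw [← Matrix.fromBlocks_one, Matrix.fromBlocks_smul, fromBlocksSub]
      simp
    rw [hblocks]
    simp [Matrix.reindex_apply, Matrix.submatrix_sub, Matrix.submatrix_smul,
      Matrix.submatrix_one_equiv]
  have hdJ : ∀ z : ℂ, ‖z - γ‖ = ρ →
      (z • (1 : Matrix (Fin d) (Fin d) ℂ) - J).det ≠ 0 := by
    intro z hz
    rw [hJb z, Matrix.det_reindex_self, Matrix.det_fromBlocks_zero₂₁]
    exact mul_ne_zero (hdJ1 z hz) (hdJ2 z hz)
  -- the central decomposition
  have hWz : ∀ z : ℂ, T * (z • B - A) * S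
      = Matrix.reindex e1 e1 (Matrix.fromBlocks
          (z • (1 : Matrix (Fin d) (Fin d) ℂ) - J) 0 0 (z • N - 1)) := by
    intro z
    have h0 : T * (z • B - A) * S = z • (T * B * S) - T * A * S := by
      rw [Matrix.mul_sub, Matrix.sub_mul, mul_smul_comm, smul_mul_assoc]
    rw [h0, hA, hB]
    have hblocks : Matrix.fromBlocks
        (z • (1 : Matrix (Fin d) (Fin d) ℂ) - J) 0 0 (z • N - 1)
        = z • Matrix.fromBlocks (1 : Matrix (Fin d) (Fin d) ℂ) 0 0 N
          - Matrix.fromBlocks J 0 0 (1 : Matrix (Fin (n - d)) (Fin (n - d)) ℂ) := by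
      rw [Matrix.fromBlocks_smul, fromBlocksSub]
      simp
    rw [hblocks]
    simp [Matrix.reindex_apply, Matrix.submatrix_sub, Matrix.submatrix_smul]
  have hglobal : ∀ z : ℂ, ‖z - γ‖ = ρ →
      IsUnit (z • B - A) ∧ (z • B - A)⁻¹ * B = S * Mid z * S⁻¹ := by
    intro z hz
    have hWdet : (Matrix.reindex e1 e1 (Matrix.fromBlocks
        (z • (1 : Matrix (Fin d) (Fin d) ℂ) - J) 0 0 (z • N - 1))).det ≠ 0 := by
      rw [Matrix.det_reindex_self, Matrix.det_fromBlocks_zero₂₁]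
      exact mul_ne_zero (hdJ z hz) (hdN z)
    have hABdet : (z • B - A).det ≠ 0 := by
      intro h0
      have h3 := congrArg Matrix.det (hWz z)
      rw [Matrix.det_mul, Matrix.det_mul, h0, mul_zero, zero_mul] at h3
      exact hWdet h3.symm
    have hABunit : IsUnit (z • B - A) :=
      (Matrix.isUnit_iff_isUnit_det _).mpr (isUnit_iff_ne_zero.mpr hABdet)
    refine ⟨hABunit, ?_⟩
    have e5 : T⁻¹ * (T * (z • B - A) * S) * S⁻¹ = z • B - A := by
      calc T⁻¹ * (T * (z • B - A) * S) * S⁻¹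
          = (T⁻¹ * T) * ((z • B - A) * (S * S⁻¹)) := by
            simp only [Matrix.mul_assoc]
        _ = z • B - A := by
            rw [Matrix.nonsing_inv_mul _ hTdet, Matrix.mul_nonsing_inv _ hSdet,
              Matrix.one_mul, Matrix.mul_one]
    have hzBA : z • B - A = T⁻¹ * Matrix.reindex e1 e1 (Matrix.fromBlocks
        (z • (1 : Matrix (Fin d) (Fin d) ℂ) - J) 0 0 (z • N - 1)) * S⁻¹ := by
      rw [← hWz z]
      exact e5.symm
    have hinv : (z • B - A)⁻¹ = S * (Matrix.reindex e1 e1 (Matrix.fromBlocks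
        (z • (1 : Matrix (Fin d) (Fin d) ℂ) - J) 0 0 (z • N - 1)))⁻¹ * T := by
      rw [hzBA, Matrix.mul_inv_rev, Matrix.mul_inv_rev,
        Matrix.nonsing_inv_nonsing_inv _ hSdet, Matrix.nonsing_inv_nonsing_inv _ hTdet,
        Matrix.mul_assoc]
    have hTB : T * B = Matrix.reindex e1 e1
        (Matrix.fromBlocks (1 : Matrix (Fin d) (Fin d) ℂ) 0 0 N) * S⁻¹ := by
      rw [← hB]
      rw [Matrix.mul_assoc (T * B) S S⁻¹, Matrix.mul_nonsing_inv _ hSdet, Matrix.mul_one]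
    have hWinv : (Matrix.reindex e1 e1 (Matrix.fromBlocks
        (z • (1 : Matrix (Fin d) (Fin d) ℂ) - J) 0 0 (z • N - 1)))⁻¹
        = Matrix.reindex e1 e1 (Matrix.fromBlocks
          ((z • (1 : Matrix (Fin d) (Fin d) ℂ) - J)⁻¹) 0 0 ((z • N - 1)⁻¹)) := by
      rw [Matrix.inv_reindex, blockdiag_inv _ _ (hdJ z hz) (hdN z)]
    have hprod : Matrix.reindex e1 e1 (Matrix.fromBlocks
          ((z • (1 : Matrix (Fin d) (Fin d) ℂ) - J)⁻¹) 0 0 ((z • N - 1)⁻¹))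
        * Matrix.reindex e1 e1
          (Matrix.fromBlocks (1 : Matrix (Fin d) (Fin d) ℂ) 0 0 N) = Mid z := by
      rw [reindex_mul, Matrix.fromBlocks_multiply]
      simp only [hMiddef, Matrix.mul_one, Matrix.mul_zero, Matrix.zero_mul, add_zero, zero_add]
      congr 2
      rw [hJb z, Matrix.inv_reindex, blockdiag_inv _ _ (hdJ1 z hz) (hdJ2 z hz)]
    rw [hinv, hWinv]
    calc S * Matrix.reindex e1 e1 (Matrix.fromBlocks
          ((z • (1 : Matrix (Fin d) (Fin d) ℂ) - J)⁻¹) 0 0 ((z • N - 1)⁻¹)) * T * B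
        = S * (Matrix.reindex e1 e1 (Matrix.fromBlocks
            ((z • (1 : Matrix (Fin d) (Fin d) ℂ) - J)⁻¹) 0 0 ((z • N - 1)⁻¹)) * (T * B)) := by
          simp only [Matrix.mul_assoc]
      _ = S * (Mid z * S⁻¹) := by
          rw [hTB, ← hprod]
          simp only [Matrix.mul_assoc]
      _ = S * Mid z * S⁻¹ := by rw [Matrix.mul_assoc]
  have hPapp : ∀ i j : Fin n, Pbig i j = if i = j ∧ (i : ℕ) < s then 1 else 0 := by
    intro i j
    simp only [hPbigdef, he3]
    exact proj_apply (hs.trans hd) i j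
  have hzero : (∮ z in C(γ, ρ), (0 : ℂ)) = 0 := by simp [circleIntegral]
  have hEntry : ∀ k l : Fin n, CircleIntegrable (fun z => Mid z k l) γ ρ ∧
      (∮ z in C(γ, ρ), Mid z k l) = (2 * (Real.pi : ℂ) * Complex.I) * Pbig k l := by
    intro k l
    rcases lt_or_ge (k : ℕ) d with hkd | hkd
    · rcases lt_or_ge (l : ℕ) d with hld | hld
      · -- both in J-block
        rcases lt_or_ge (k : ℕ) s with hks | hks
        · rcases lt_or_ge (l : ℕ) s with hls | hls
          · have hf : ∀ z : ℂ, Mid z k l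
                = (z • (1 : Matrix (Fin s) (Fin s) ℂ) - J₁)⁻¹ ⟨(k : ℕ), hks⟩ ⟨(l : ℕ), hls⟩ := by
              intro z
              simp only [hMiddef, Matrix.reindex_apply, Matrix.submatrix_apply, he1, he2]
              rw [eqv_symm_lt hd k hkd, eqv_symm_lt hd l hld]
              simp only [Matrix.fromBlocks_apply₁₁, Matrix.submatrix_apply]
              rw [eqv_symm_lt hs ⟨(k : ℕ), hkd⟩ hks, eqv_symm_lt hs ⟨(l : ℕ), hld⟩ hls]
              simp only [Matrix.fromBlocks_apply₁₁]
            constructor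
            · simp only [hf]
              exact circleIntegrable_inv_entry J₁ hρ hdJ1 _ _
            · simp only [hf]
              rw [integral_inside J₁ hρ hin _ _, hPapp]
              congr 1
              simp [Fin.ext_iff, hks]
          · have hf : ∀ z : ℂ, Mid z k l = 0 := by
              intro z
              simp only [hMiddef, Matrix.reindex_apply, Matrix.submatrix_apply, he1, he2]
              rw [eqv_symm_lt hd k hkd, eqv_symm_lt hd l hld]
              simp only [Matrix.fromBlocks_apply₁₁, Matrix.submatrix_apply]
              rw [eqv_symm_lt hs ⟨(k : ℕ), hkd⟩ hks, eqv_symm_ge hs ⟨(l : ℕ), hld⟩ (show ¬(l : ℕ) < s by omega)]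
              simp
            constructor
            · simp only [hf]; exact circleIntegrable_const 0 γ ρ
            · simp only [hf]
              rw [hzero, hPapp]
              have : ¬(k = l ∧ (k : ℕ) < s) := by rintro ⟨rfl, _⟩; omega
              simp [this]
        · rcases lt_or_ge (l : ℕ) s with hls | hls
          · have hf : ∀ z : ℂ, Mid z k l = 0 := by
              intro z
              simp only [hMiddef, Matrix.reindex_apply, Matrix.submatrix_apply, he1, he2]
              rw [eqv_symm_lt hd k hkd, eqv_symm_lt hd l hld]
              simp only [Matrix.fromBlocks_apply₁₁, Matrix.submatrix_apply]
              rw [eqv_symm_ge hs ⟨(k : ℕ), hkd⟩ (show ¬(k : ℕ) < s by omega), eqv_symm_lt hs ⟨(l : ℕ), hld⟩ hls]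
              simp
            constructor
            · simp only [hf]; exact circleIntegrable_const 0 γ ρ
            · simp only [hf]
              rw [hzero, hPapp]
              have : ¬(k = l ∧ (k : ℕ) < s) := by rintro ⟨_, h2⟩; omega
              simp [this]
          · have hf : ∀ z : ℂ, Mid z k l
                = (z • (1 : Matrix (Fin (d - s)) (Fin (d - s)) ℂ) - J₂)⁻¹
                    ⟨(k : ℕ) - s, by omega⟩ ⟨(l : ℕ) - s, by omega⟩ := by
              intro z
              simp only [hMiddef, Matrix.reindex_apply, Matrix.submatrix_apply, he1, he2]
              rw [eqv_symm_lt hd k hkd, eqv_symm_lt hd l hld]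
              simp only [Matrix.fromBlocks_apply₁₁, Matrix.submatrix_apply]
              rw [eqv_symm_ge hs ⟨(k : ℕ), hkd⟩ (show ¬(k : ℕ) < s by omega), eqv_symm_ge hs ⟨(l : ℕ), hld⟩ (show ¬(l : ℕ) < s by omega)]
              simp only [Matrix.fromBlocks_apply₂₂]
            constructor
            · simp only [hf]
              exact circleIntegrable_inv_entry J₂ hρ hdJ2 _ _
            · simp only [hf]
              rw [integral_outside J₂ hρ hout _ _, hPapp]
              have : ¬(k = l ∧ (k : ℕ) < s) := by rintro ⟨_, h2⟩; omega
              simp [this]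
      · have hf : ∀ z : ℂ, Mid z k l = 0 := by
          intro z
          simp only [hMiddef, Matrix.reindex_apply, Matrix.submatrix_apply, he1]
          rw [eqv_symm_lt hd k hkd, eqv_symm_ge hd l (by omega)]
          simp
        constructor
        · simp only [hf]; exact circleIntegrable_const 0 γ ρ
        · simp only [hf]
          rw [hzero, hPapp]
          have : ¬(k = l ∧ (k : ℕ) < s) := by rintro ⟨rfl, _⟩; omega
          simp [this]
    · rcases lt_or_ge (l : ℕ) d with hld | hld
      · have hf : ∀ z : ℂ, Mid z k l = 0 := by
          intro z
          simp only [hMiddef, Matrix.reindex_apply, Matrix.submatrix_apply, he1]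
          rw [eqv_symm_ge hd k (by omega), eqv_symm_lt hd l hld]
          simp
        constructor
        · simp only [hf]; exact circleIntegrable_const 0 γ ρ
        · simp only [hf]
          rw [hzero, hPapp]
          have : ¬(k = l ∧ (k : ℕ) < s) := by rintro ⟨_, h2⟩; omega
          simp [this]
      · have hf : ∀ z : ℂ, Mid z k l
            = ((z • N - 1)⁻¹ * N) ⟨(k : ℕ) - d, by omega⟩ ⟨(l : ℕ) - d, by omega⟩ := by
          intro z
          simp only [hMiddef, Matrix.reindex_apply, Matrix.submatrix_apply, he1]
          rw [eqv_symm_ge hd k (by omega), eqv_symm_ge hd l (by omega)]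
          simp only [Matrix.fromBlocks_apply₂₂]
        constructor
        · simp only [hf]
          exact circleIntegrable_nilpotent_entry N hN hρ _ _
        · simp only [hf]
          rw [integral_nilpotent N hN hρ _ _, hPapp]
          have : ¬(k = l ∧ (k : ℕ) < s) := by rintro ⟨_, h2⟩; omega
          simp [this]
  -- the main integral computation
  have hsph : ∀ z ∈ Metric.sphere γ ρ, ‖z - γ‖ = ρ := by
    intro z hz
    rwa [mem_sphere, Complex.dist_eq] at hz
  have hI2 : ∀ i j : Fin n, (∮ z in C(γ, ρ), ((z • B - A)⁻¹ * B) i j)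
      = (2 * (Real.pi : ℂ) * Complex.I) * (S * Pbig * S⁻¹) i j := by
    intro i j
    have hsum : ∀ X : Matrix (Fin n) (Fin n) ℂ, (S * X * S⁻¹) i j
        = ∑ p : Fin n × Fin n, (S i p.1 * S⁻¹ p.2 j) * X p.1 p.2 := by
      intro X
      rw [Fintype.sum_prod_type, Matrix.mul_apply]
      simp only [Matrix.mul_apply, Finset.sum_mul]
      rw [Finset.sum_comm]
      exact Finset.sum_congr rfl fun k _ => Finset.sum_congr rfl fun l _ => by ring
    calc (∮ z in C(γ, ρ), ((z • B - A)⁻¹ * B) i j)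
        = ∮ z in C(γ, ρ), (S * Mid z * S⁻¹) i j := by
          refine circleIntegral.integral_congr hρ.le fun z hz => ?_
          rw [(hglobal z (hsph z hz)).2]
      _ = ∮ z in C(γ, ρ), ∑ p : Fin n × Fin n, (S i p.1 * S⁻¹ p.2 j) * Mid z p.1 p.2 := by
          refine circleIntegral.integral_congr hρ.le fun z _ => ?_
          exact hsum (Mid z)
      _ = ∑ p : Fin n × Fin n, ∮ z in C(γ, ρ), (S i p.1 * S⁻¹ p.2 j) * Mid z p.1 p.2 := by
          refine circleIntegral_finset_sum _ _ fun p _ => ?_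
          show IntervalIntegrable _ MeasureTheory.volume 0 (2 * Real.pi)
          exact IntervalIntegrable.const_mul (hEntry p.1 p.2).1 _
      _ = ∑ p : Fin n × Fin n, (S i p.1 * S⁻¹ p.2 j)
            * ((2 * (Real.pi : ℂ) * Complex.I) * Pbig p.1 p.2) := by
          refine Finset.sum_congr rfl fun p _ => ?_
          rw [← (hEntry p.1 p.2).2]
          simpa using
            circleIntegral.integral_smul (S i p.1 * S⁻¹ p.2 j) (fun z => Mid z p.1 p.2) γ ρ
      _ = (2 * (Real.pi : ℂ) * Complex.I) * (S * Pbig * S⁻¹) i j := by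
          rw [hsum Pbig, Finset.mul_sum]
          exact Finset.sum_congr rfl fun p _ => by ring
  have hPP : S * Pbig * S⁻¹ = S.submatrix id (Fin.castLE (hs.trans hd)) *
      S⁻¹.submatrix (Fin.castLE (hs.trans hd)) id := by
    ext i j
    have h1 : ∀ x : Fin n, (S * Pbig) i x = if (x : ℕ) < s then S i x else 0 := by
      intro x
      rw [Matrix.mul_apply, Finset.sum_eq_single x]
      · rw [hPapp]
        simp
      · intro b _ hb
        rw [hPapp]
        simp [hb]
      · intro hx; exact absurd (Finset.mem_univ x) hx
    rw [Matrix.mul_apply]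
    calc ∑ x : Fin n, (S * Pbig) i x * S⁻¹ x j
        = ∑ x : Fin n, (if (x : ℕ) < s then S i x * S⁻¹ x j else 0) := by
          refine Finset.sum_congr rfl fun x _ => ?_
          rw [h1]
          split_ifs <;> simp
      _ = ∑ y : Fin s ⊕ Fin (n - s),
            (fun x : Fin n => if (x : ℕ) < s then S i x * S⁻¹ x j else 0) (e3 y) :=
          (Equiv.sum_comp e3 _).symm
      _ = ∑ a : Fin s, S i (Fin.castLE (hs.trans hd) a) * S⁻¹ (Fin.castLE (hs.trans hd) a) j := by
          rw [Fintype.sum_sum_type]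
          have hz2 : ∀ b : Fin (n - s),
              (fun x : Fin n => if (x : ℕ) < s then S i x * S⁻¹ x j else 0) (e3 (Sum.inr b))
                = 0 := by
            intro b
            simp only [he3]
            rw [if_neg]
            rw [eqv_inr_val (hs.trans hd)]
            omega
          have hz1 : ∀ a : Fin s,
              (fun x : Fin n => if (x : ℕ) < s then S i x * S⁻¹ x j else 0) (e3 (Sum.inl a))
                = S i (Fin.castLE (hs.trans hd) a) * S⁻¹ (Fin.castLE (hs.trans hd) a) j := by
            intro a
            simp only [he3]
            rw [eqv_inl (hs.trans hd)]
            rw [if_pos]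
            simp
          simp only [hz1, hz2]
          simp
      _ = (S.submatrix id (Fin.castLE (hs.trans hd)) *
            S⁻¹.submatrix (Fin.castLE (hs.trans hd)) id) i j := by
          rw [Matrix.mul_apply]
          simp [Matrix.submatrix_apply]
  have h2pi : (2 * (Real.pi : ℂ) * Complex.I) ≠ 0 := by
    simp [Real.pi_ne_zero, Complex.I_ne_zero, Complex.ofReal_ne_zero]
  have hG2 : ∀ i j : Fin n, (1 / (2 * (Real.pi : ℂ) * Complex.I)) *
      (∮ z in C(γ, ρ), ((z • B - A)⁻¹ * B) i j) = (S * Pbig * S⁻¹) i j := by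
    intro i j
    rw [hI2 i j]
    field_simp
  exact ⟨fun z hz => (hglobal z hz).1, fun i j => hG2 i j,
    fun i j => (hG2 i j).trans (by rw [hPP])⟩
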